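/- Every solution w : ℝ → ℝ of w'' + w(1-w²) = 0 with w(z) → ±1 as z → ±∞ and w' > 0 everywhere is of the form w(z) = tanh((z - z₀)/√2) for some z₀ ∈ ℝ. -/

import Mathlib

open Real

lemma my_tanh_lt_one (x : ℝ) : Real.tanh x < 1 := by
  rw [Real.tanh_eq_sinh_div_cosh, div_lt_one (Real.cosh_pos x)]
  rw [Real.sinh_eq, Real.cosh_eq]
  nlinarith [Real.exp_pos (-x)]

lemma my_neg_one_lt_tanh (x : ℝ) : -1 < Real.tanh x := by
  rw [Real.tanh_eq_sinh_div_cosh, lt_div_iff₀ (Real.cosh_pos x)]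
  rw [Real.sinh_eq, Real.cosh_eq]
  nlinarith [Real.exp_pos x]

lemma my_tanh_hasDerivAt (x : ℝ) : HasDerivAt Real.tanh (1 - Real.tanh x ^ 2) x := by
  have hfun : Real.tanh = fun y => Real.sinh y / Real.cosh y :=
    funext Real.tanh_eq_sinh_div_cosh
  have hc : Real.cosh x ≠ 0 := (Real.cosh_pos x).ne'
  have h := (Real.hasDerivAt_sinh x).div (Real.hasDerivAt_cosh x) hc
  rw [hfun]
  refine h.congr_deriv ?_
  field_simp

/-- Every solution of `w'' + w(1-w²) = 0` on `ℝ` with `w(±∞) = ±1` and `w' > 0`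
is a translate of the heteroclinic `z ↦ tanh(z/√2)`. -/
theorem heteroclinic_uniqueness (w : ℝ → ℝ)
    (hsmooth : ContDiff ℝ 2 w)
    (heq : ∀ z : ℝ, deriv (deriv w) z + w z * (1 - (w z) ^ 2) = 0)
    (htop : Filter.Tendsto w Filter.atTop (nhds 1))
    (hbot : Filter.Tendsto w Filter.atBot (nhds (-1)))
    (hmono : ∀ z : ℝ, 0 < deriv w z) :
    ∃ z₀ : ℝ, ∀ z : ℝ, w z = Real.tanh ((z - z₀) / Real.sqrt 2) := by
  have hw1 : Differentiable ℝ w := hsmooth.differentiable (by norm_num)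
  have h2 : ContDiff ℝ ((1:ℕ)+1) w := by convert hsmooth using 2; norm_num
  have hdw : Differentiable ℝ (deriv w) :=
    (contDiff_succ_iff_deriv.mp h2).2.2.differentiable (by norm_num)
  have hcw : Continuous w := hw1.continuous
  set E : ℝ → ℝ := fun z => (deriv w z) ^ 2 - (1 - (w z) ^ 2) ^ 2 / 2 with hE
  -- E has zero derivative
  have hE' : ∀ z, HasDerivAt E 0 z := by
    intro z
    have h1 : HasDerivAt (fun z => (deriv w z) ^ 2)
        (2 * deriv w z * deriv (deriv w) z) z := by
      have := ((hdw z).hasDerivAt).pow 2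
      refine this.congr_deriv ?_; ring
    have h2' : HasDerivAt (fun z => (1 - (w z) ^ 2) ^ 2 / 2)
        (2 * (1 - (w z)^2) * (-(2 * w z * deriv w z)) / 2) z := by
      have hw : HasDerivAt w (deriv w z) z := (hw1 z).hasDerivAt
      have := (((hw.pow 2).const_sub 1).pow 2).div_const 2
      refine this.congr_deriv ?_; simp only [Pi.pow_apply]; ring
    have := h1.sub h2'
    refine this.congr_deriv ?_
    have h0 := heq z
    have : deriv (deriv w) z = - (w z * (1 - w z ^ 2)) := by linarith
    rw [this]; ring
  have hEconst : ∀ z, E z = E 0 := by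
    intro z
    have : ∀ x y : ℝ, E x = E y := fun x y =>
      is_const_of_deriv_eq_zero (fun t => (hE' t).differentiableAt)
        (fun t => (hE' t).deriv) x y
    exact this z 0
  set c : ℝ := E 0 with hc
  -- (deriv w)^2 tends to c at top
  have hlim : Filter.Tendsto (fun z => (deriv w z) ^ 2) Filter.atTop (nhds c) := by
    have h1 : Filter.Tendsto (fun z => (1 - (w z)^2)^2 / 2) Filter.atTop (nhds 0) := by
      have : Filter.Tendsto (fun z => (1 - (w z)^2)^2 / 2) Filter.atTop
          (nhds ((1 - (1:ℝ)^2)^2 / 2)) := by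
        exact (((htop.pow 2).const_sub 1).pow 2).div_const 2
      simpa using this
    have h2' : (fun z => (deriv w z)^2) = fun z => E z + (1 - (w z)^2)^2/2 := by
      funext z; simp only [hE]; ring
    rw [h2']
    have : Filter.Tendsto E Filter.atTop (nhds c) := by
      simp only [Filter.tendsto_congr (fun z => hEconst z)]  -- constant
      exact tendsto_const_nhds
    simpa using this.add h1
  -- c ≥ 0
  have hc0 : 0 ≤ c := ge_of_tendsto hlim (Filter.Eventually.of_forall fun z => sq_nonneg _)
  -- c ≤ 0 by contradiction
  have hc1 : c ≤ 0 := by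
    by_contra hpos
    push_neg at hpos
    have hhalf : (0:ℝ) < c/2 := half_pos hpos
    have hev : ∀ᶠ z in Filter.atTop, c/2 < (deriv w z)^2 :=
      hlim.eventually (eventually_gt_nhds (show c/2 < c by linarith))
    obtain ⟨a, ha⟩ := hev.exists_forall_of_atTop
    set m : ℝ := Real.sqrt (c/2) with hm
    have hmpos : 0 < m := Real.sqrt_pos.mpr hhalf
    have hlow : ∀ z ≥ a, m ≤ deriv w z := by
      intro z hz
      have := ha z hz
      have : m < deriv w z := by
        rw [hm]
        exact (Real.sqrt_lt' (hmono z)).mpr this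
      linarith
    -- w z ≥ w a + m (z - a) for z ≥ a
    have hgrow : ∀ z ≥ a, w a + m * (z - a) ≤ w z := by
      intro z hz
      have hmono2 : MonotoneOn (fun t => w t - m * t) (Set.Ici a) := by
        apply monotoneOn_of_deriv_nonneg (convex_Ici a)
        · exact (hcw.sub (continuous_const.mul continuous_id)).continuousOn
        · intro t _
          exact ((hw1 t).sub ((differentiable_const m).mul differentiable_id t)).differentiableWithinAt
        · intro t ht
          rw [interior_Ici] at ht
          have hd : HasDerivAt (fun t => w t - m * t) (deriv w t - m * 1) t :=
            ((hw1 t).hasDerivAt).sub ((hasDerivAt_id t).const_mul m)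
          rw [hd.deriv]
          have := hlow t (le_of_lt ht)
          linarith
      have := hmono2 (Set.self_mem_Ici) (Set.mem_Ici.mpr hz) hz
      simp only at this
      linarith
    have htends : Filter.Tendsto w Filter.atTop Filter.atTop := by
      have hle : (fun z => w a + m * (z - a)) ≤ᶠ[Filter.atTop] w :=
        (Filter.eventually_ge_atTop a).mono fun z hz => hgrow z hz
      have hlin : Filter.Tendsto (fun z => w a + m * (z - a)) Filter.atTop Filter.atTop := by
        apply Filter.tendsto_atTop_add_const_left
        exact (Filter.tendsto_atTop_add_const_right _ (-a) Filter.tendsto_id).const_mul_atTop hmpos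
      exact Filter.tendsto_atTop_mono' _ hle hlin
    exact not_tendsto_atTop_of_tendsto_nhds htop htends
  have hczero : c = 0 := le_antisymm hc1 hc0
  -- pointwise energy identity
  have hEz : ∀ z, (deriv w z) ^ 2 = (1 - (w z) ^ 2) ^ 2 / 2 := by
    intro z
    have := hEconst z
    rw [hczero] at this
    simp only [hE] at this
    linarith
  -- strict monotonicity
  have hsm : StrictMono w := strictMono_of_deriv_pos hmono
  -- bounds
  have hub : ∀ z, w z < 1 := by
    intro z
    have h1 : w (z + 1) ≤ 1 := by
      apply ge_of_tendsto htop
      exact (Filter.eventually_ge_atTop (z+1)).mono fun y hy => hsm.monotone hy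
    have : w z < w (z + 1) := hsm (by linarith)
    linarith
  have hlb : ∀ z, -1 < w z := by
    intro z
    have h1 : -1 ≤ w (z - 1) := by
      apply le_of_tendsto hbot
      exact (Filter.eventually_le_atBot (z-1)).mono fun y hy => hsm.monotone hy
    have : w (z - 1) < w z := hsm (by linarith)
    linarith
  have hsq2 : (0:ℝ) < Real.sqrt 2 := Real.sqrt_pos.mpr (by norm_num)
  have hsq2' : Real.sqrt 2 ^ 2 = 2 := Real.sq_sqrt (by norm_num)
  -- first-order ODE
  have hODE : ∀ z, deriv w z = (1 - (w z) ^ 2) / Real.sqrt 2 := by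
    intro z
    have hpos1 : 0 < 1 - (w z) ^ 2 := by nlinarith [hub z, hlb z]
    have hpos2 : 0 < (1 - (w z) ^ 2) / Real.sqrt 2 := div_pos hpos1 hsq2
    have hsqeq : (deriv w z) ^ 2 = ((1 - (w z) ^ 2) / Real.sqrt 2) ^ 2 := by
      rw [div_pow, hsq2']; exact hEz z
    calc deriv w z = Real.sqrt ((deriv w z) ^ 2) := (Real.sqrt_sq (hmono z).le).symm
      _ = Real.sqrt (((1 - (w z) ^ 2) / Real.sqrt 2) ^ 2) := by rw [hsqeq]
      _ = (1 - (w z) ^ 2) / Real.sqrt 2 := Real.sqrt_sq hpos2.le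
  -- existence of a zero
  obtain ⟨a, ha⟩ : ∃ a, w a < 0 := by
    have := hbot.eventually (eventually_lt_nhds (show (-1:ℝ) < 0 by norm_num))
    obtain ⟨a, ha⟩ := this.exists
    exact ⟨a, ha⟩
  obtain ⟨b, hb⟩ : ∃ b, 0 < w b := by
    have := htop.eventually (eventually_gt_nhds (show (0:ℝ) < 1 by norm_num))
    obtain ⟨b, hb⟩ := this.exists
    exact ⟨b, hb⟩
  have hab : a ≤ b := le_of_lt (hsm.lt_iff_lt.mp (lt_trans ha hb))
  obtain ⟨z₀, hz₀mem, hz₀⟩ : ∃ z₀ ∈ Set.Icc a b, w z₀ = 0 := by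
    have := intermediate_value_Icc hab hcw.continuousOn
    have h0 : (0:ℝ) ∈ Set.Icc (w a) (w b) := ⟨ha.le, hb.le⟩
    obtain ⟨z₀, hz₀mem, hz₀⟩ := this h0
    exact ⟨z₀, hz₀mem, hz₀⟩
  refine ⟨z₀, fun z => ?_⟩
  -- set up ODE uniqueness
  set g : ℝ → ℝ := fun t => Real.tanh ((t - z₀) / Real.sqrt 2) with hg
  have hgderiv : ∀ t, HasDerivAt g ((1 - (g t) ^ 2) / Real.sqrt 2) t := by
    intro t
    have h1 : HasDerivAt (fun t : ℝ => (t - z₀) / Real.sqrt 2) (1 / Real.sqrt 2) t := by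
      have := ((hasDerivAt_id t).sub_const z₀).div_const (Real.sqrt 2)
      simpa using this
    have h2' := (my_tanh_hasDerivAt ((t - z₀) / Real.sqrt 2)).comp t h1
    refine h2'.congr_deriv ?_
    simp only [hg]
    ring
  have hwderiv : ∀ t, HasDerivAt w ((1 - (w t) ^ 2) / Real.sqrt 2) t := by
    intro t
    have := (hw1 t).hasDerivAt
    rwa [hODE t] at this
  -- Lipschitz vector field on Icc (-1) 1
  set V : ℝ → ℝ → ℝ := fun _ x => (1 - x ^ 2) / Real.sqrt 2 with hV
  have hlip : ∀ t, LipschitzOnWith 2 (V t) (Set.Icc (-1:ℝ) 1) := by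
    intro t
    rw [lipschitzOnWith_iff_dist_le_mul]
    intro x hx y hy
    simp only [hV, Real.dist_eq]
    rw [div_sub_div_same, abs_div, abs_of_pos hsq2]
    rw [div_le_iff₀ hsq2]
    have e : 1 - x ^ 2 - (1 - y ^ 2) = (x + y) * (y - x) := by ring
    rw [e, abs_mul, abs_sub_comm y x]
    have h2 : |x + y| ≤ 2 := by
      rw [abs_le]; constructor <;> nlinarith [hx.1, hx.2, hy.1, hy.2]
    have h4 : (1:ℝ) ≤ Real.sqrt 2 := by nlinarith
    push_cast
    nlinarith [abs_nonneg (x - y), mul_le_mul_of_nonneg_right h2 (abs_nonneg (x - y))]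
  have key : w z = g z := by
    have hzmem : z ∈ Set.Icc (min z₀ z - 1) (max z₀ z + 1) := by
      constructor
      · have := min_le_right z₀ z; linarith
      · have := le_max_right z₀ z; linarith
    have ht₀ : z₀ ∈ Set.Ioo (min z₀ z - 1) (max z₀ z + 1) := by
      constructor
      · have := min_le_left z₀ z; linarith
      · have := le_max_left z₀ z; linarith
    have hgcont : Continuous g := by
      have h1 : Continuous Real.tanh := continuous_iff_continuousAt.mpr
        fun y => (my_tanh_hasDerivAt y).differentiableAt.continuousAt
      exact h1.comp ((continuous_id.sub continuous_const).div_const _)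
    have heqon := ODE_solution_unique_of_mem_Icc (fun t _ => hlip t) ht₀
      hcw.continuousOn
      (fun t _ => hwderiv t)
      (fun t _ => ⟨(hlb t).le, (hub t).le⟩)
      hgcont.continuousOn
      (fun t _ => hgderiv t)
      (fun t _ => ⟨(my_neg_one_lt_tanh _).le, (my_tanh_lt_one _).le⟩)
      (by simp [hg, hz₀, Real.tanh_zero])
    exact heqon (Set.mem_Icc.mpr hzmem)
  rw [key]
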